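/- Let φ be a positive, twice-differentiable solution of φ''(x) = x^{-1/2} φ(x)^{3/2} on (0,∞) with φ' < 0, and define t(x) = 144^{-1/6} x^{1/2} φ(x)^{1/6} and u = -(16/3)^{1/3} φ^{-4/3} φ'. Then along the solution, u as a function of t satisfies du/dt = 8 (t u² - 1)/(1 - t² u) wherever 1 - t² u ≠ 0 and dt/dx ≠ 0. -/

import Mathlib

theorem majorana_transformation (φ : ℝ → ℝ)
    (hpos : ∀ x : ℝ, 0 < x → 0 < φ x)
    (hneg : ∀ x : ℝ, 0 < x → deriv φ x < 0)
    (hdiff : ∀ x : ℝ, 0 < x → DifferentiableAt ℝ φ x)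
    (hdiff' : ∀ x : ℝ, 0 < x → DifferentiableAt ℝ (deriv φ) x)
    (hode : ∀ x : ℝ, 0 < x →
      deriv (deriv φ) x = x ^ (-(1 : ℝ) / 2) * (φ x) ^ ((3 : ℝ) / 2))
    (t u : ℝ → ℝ)
    (ht : ∀ x : ℝ, t x = (144 : ℝ) ^ (-(1 : ℝ) / 6) * x ^ ((1 : ℝ) / 2) * (φ x) ^ ((1 : ℝ) / 6))
    (hu : ∀ x : ℝ, u x = -((16 / 3 : ℝ) ^ ((1 : ℝ) / 3)) * (φ x) ^ (-(4 : ℝ) / 3) * deriv φ x) :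
    ∀ x : ℝ, 0 < x → 1 - (t x) ^ 2 * u x ≠ 0 → deriv t x ≠ 0 →
      deriv u x / deriv t x = 8 * (t x * (u x) ^ 2 - 1) / (1 - (t x) ^ 2 * u x) := by
  intro x hx hden hdt0
  have hφx : 0 < φ x := hpos x hx
  -- constants
  set c : ℝ := (144 : ℝ) ^ (-(1 : ℝ) / 6) with hc
  have hcpos : 0 < c := Real.rpow_pos_of_pos (by norm_num) _
  have h144 : ((144 : ℝ)) ^ ((1 : ℝ) / 2) = 12 := by
    rw [show (144 : ℝ) = 12 ^ 2 by norm_num, ← Real.rpow_natCast (12 : ℝ) 2,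
      ← Real.rpow_mul (by norm_num : (0:ℝ) ≤ 12)]
    norm_num
  have hc3 : c ^ 3 = 1 / 12 := by
    rw [hc, ← Real.rpow_natCast ((144 : ℝ) ^ (-(1 : ℝ) / 6)) 3,
      ← Real.rpow_mul (by norm_num : (0:ℝ) ≤ 144),
      show (-(1 : ℝ) / 6 * ((3:ℕ) : ℝ)) = -((1 : ℝ) / 2) by push_cast; ring,
      Real.rpow_neg (by norm_num), h144]
    norm_num
  have hc2 : ((16 / 3 : ℝ)) ^ ((1 : ℝ) / 3) = 4 * c := by
    have h2 : ((4 * c) ^ 3 : ℝ) = 16 / 3 := by rw [mul_pow, hc3]; norm_num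
    have h4c : (0:ℝ) ≤ 4 * c := by positivity
    calc ((16 / 3 : ℝ)) ^ ((1 : ℝ) / 3) = (((4 * c) ^ 3 : ℝ)) ^ ((1 : ℝ) / 3) := by rw [h2]
      _ = 4 * c := by
          rw [← Real.rpow_natCast (4 * c) 3, ← Real.rpow_mul h4c]
          norm_num
  -- abbreviations
  set p : ℝ := φ x with hp
  set d : ℝ := deriv φ x with hd
  set A : ℝ := x ^ ((1 : ℝ) / 2) with hA
  set B : ℝ := p ^ ((1 : ℝ) / 6) with hB
  have hApos : 0 < A := Real.rpow_pos_of_pos hx _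
  have hBpos : 0 < B := Real.rpow_pos_of_pos hφx _
  have hBpow : ∀ n : ℕ, p ^ ((n : ℝ) / 6) = B ^ n := by
    intro n
    rw [hB, ← Real.rpow_natCast (p ^ ((1 : ℝ) / 6)) n, ← Real.rpow_mul hφx.le]
    congr 1
    ring
  -- exponent conversions
  have e1 : x ^ ((1 : ℝ) / 2 - 1) = A⁻¹ := by
    rw [show (1 : ℝ) / 2 - 1 = -((1 : ℝ) / 2) by norm_num, Real.rpow_neg hx.le, hA]
  have e2 : p ^ ((1 : ℝ) / 6 - 1) = (B ^ 5)⁻¹ := by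
    rw [show (1 : ℝ) / 6 - 1 = -(((5:ℕ) : ℝ) / 6) by norm_num, Real.rpow_neg hφx.le, hBpow]
  have e3 : p ^ (-(4 : ℝ) / 3 - 1) = (B ^ 14)⁻¹ := by
    rw [show -(4 : ℝ) / 3 - 1 = -(((14:ℕ) : ℝ) / 6) by norm_num, Real.rpow_neg hφx.le, hBpow]
  have e4 : p ^ (-(4 : ℝ) / 3) = (B ^ 8)⁻¹ := by
    rw [show -(4 : ℝ) / 3 = -(((8:ℕ) : ℝ) / 6) by norm_num, Real.rpow_neg hφx.le, hBpow]
  have e5 : x ^ (-(1 : ℝ) / 2) = A⁻¹ := by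
    rw [show -(1 : ℝ) / 2 = -((1 : ℝ) / 2) by norm_num, Real.rpow_neg hx.le, hA]
  have e6 : p ^ ((3 : ℝ) / 2) = B ^ 9 := by
    rw [show (3 : ℝ) / 2 = ((9:ℕ) : ℝ) / 6 by norm_num, hBpow]
  -- derivative of t
  have htfun : t = fun y => c * y ^ ((1 : ℝ) / 2) * φ y ^ ((1 : ℝ) / 6) := funext ht
  have H1 : HasDerivAt (fun y : ℝ => y ^ ((1 : ℝ) / 2)) (((1 : ℝ) / 2) * x ^ ((1 : ℝ) / 2 - 1)) x :=
    Real.hasDerivAt_rpow_const (Or.inl hx.ne')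
  have H2 : HasDerivAt (fun y => φ y ^ ((1 : ℝ) / 6)) (d * ((1 : ℝ) / 6) * p ^ ((1 : ℝ) / 6 - 1)) x :=
    (hdiff x hx).hasDerivAt.rpow_const (Or.inl hφx.ne')
  have Ht : HasDerivAt t
      (c * (((1 : ℝ) / 2) * x ^ ((1 : ℝ) / 2 - 1)) * (p ^ ((1 : ℝ) / 6))
        + c * x ^ ((1 : ℝ) / 2) * (d * ((1 : ℝ) / 6) * p ^ ((1 : ℝ) / 6 - 1))) x := by
    rw [htfun]
    exact (H1.const_mul c).mul H2
  have dT : deriv t x = c * (B / (2 * A) + A * d / (6 * B ^ 5)) := by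
    rw [Ht.deriv, e1, e2, ← hA, ← hB]
    field_simp
  -- derivative of u
  have hufun : u = fun y => -((16 / 3 : ℝ) ^ ((1 : ℝ) / 3)) * φ y ^ (-(4 : ℝ) / 3) * deriv φ y :=
    funext hu
  have H3 : HasDerivAt (fun y => φ y ^ (-(4 : ℝ) / 3)) (d * (-(4 : ℝ) / 3) * p ^ (-(4 : ℝ) / 3 - 1)) x :=
    (hdiff x hx).hasDerivAt.rpow_const (Or.inl hφx.ne')
  have H4 : HasDerivAt (deriv φ) (deriv (deriv φ) x) x := (hdiff' x hx).hasDerivAt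
  have Hu : HasDerivAt u
      (-((16 / 3 : ℝ) ^ ((1 : ℝ) / 3)) * (d * (-(4 : ℝ) / 3) * p ^ (-(4 : ℝ) / 3 - 1)) * d
        + -((16 / 3 : ℝ) ^ ((1 : ℝ) / 3)) * p ^ (-(4 : ℝ) / 3) * deriv (deriv φ) x) x := by
    rw [hufun]
    exact (H3.const_mul _).mul H4
  have dU : deriv u x = 4 * c * (4 * d ^ 2 / (3 * B ^ 14) - B / A) := by
    rw [Hu.deriv, hode x hx, hc2, e3, e4, e5, e6]
    field_simp
    ring
  -- algebraic simplifications
  have hS1 : t x ^ 2 * u x = -(c ^ 3) * (4 * A ^ 2 * d / B ^ 6) := by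
    rw [ht x, hu x, hc2, e4, ← hA, ← hB, ← hd]
    field_simp
  have hT1 : t x * u x ^ 2 = c ^ 3 * (16 * A * d ^ 2 / B ^ 15) := by
    rw [ht x, hu x, hc2, e4, ← hA, ← hB, ← hd]
    field_simp
    ring
  rw [div_eq_div_iff hdt0 hden, dU, dT, hS1, hT1, hc3]
  field_simp
  ring
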